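/- Let C, V be finite sets, P a stochastic matrix on C×V with invariant distribution p̂ (P p̂ = p̂) whose marginal p̄(v) = ∑_{c∈C} p̂(c,v) is strictly positive for every v ∈ V, and let P_V be the induced chain on V. Let X ⊆ V satisfy 0 < p̂(C×X) ≤ 1/2, and let p̂_{C×X} denote the distribution p̂ conditioned on C×X (i.e. p̂_{C×X}(c,v) = p̂(c,v)/p̂(C×X) for v ∈ X and 0 otherwise). Then for every t ≥ 0, ‖f(P^t p̂_{C×X}) − p̄‖_TV ≥ 1/2 − t·Φ_X(P_V), where f is the marginal map f(p)(v) = ∑_{c∈C} p(c,v). -/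

import Mathlib

open Finset

section Defs

variable {S : Type*} [Fintype S]

/-- `p` is a probability distribution on the finite set `S`. -/
def IsProbDist (p : S → ℝ) : Prop := (∀ s, 0 ≤ p s) ∧ ∑ s, p s = 1

/-- The mass `p(X) = ∑_{s ∈ X} p s` of a subset `X`. -/
noncomputable def mass (p : S → ℝ) (X : Set S) : ℝ := ∑ s, X.indicator p s

/-- Total variation distance `‖p - q‖_TV = (1/2) ∑_s |p s - q s|`. -/
noncomputable def tvDist (p q : S → ℝ) : ℝ := (1/2) * ∑ s, |p s - q s|

/-- A (column-)stochastic matrix `P s' s`: entries nonnegative, columns sum to one. -/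
def IsStochastic (P : S → S → ℝ) : Prop :=
  (∀ s' s, 0 ≤ P s' s) ∧ ∀ s, ∑ s', P s' s = 1

/-- Action of a matrix on a distribution: `(P p)(s') = ∑_s P s' s * p s`. -/
def matVec (P : S → S → ℝ) (p : S → ℝ) : S → ℝ := fun s' => ∑ s, P s' s * p s

open scoped Classical in
/-- Ergodic flow `Q_P(Xᶜ, X) = ∑_{s ∈ X, s' ∉ X} P s' s * pbar s`. -/
noncomputable def ergFlow (P : S → S → ℝ) (pbar : S → ℝ) (X : Set S) : ℝ :=
  ∑ s, ∑ s', if s ∈ X ∧ s' ∉ X then P s' s * pbar s else 0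

/-- Bottleneck ratio `Φ_X(P) = Q_P(Xᶜ,X) / pbar(X)`. -/
noncomputable def bottleneck (P : S → S → ℝ) (pbar : S → ℝ) (X : Set S) : ℝ :=
  ergFlow P pbar X / mass pbar X

/-- The distribution `pbar` conditioned on the set `X`. -/
noncomputable def condDist (pbar : S → ℝ) (X : Set S) : S → ℝ :=
  X.indicator (fun s => pbar s / mass pbar X)

/-- Conductance `Φ(P) = min { Φ_X(P) : 0 < pbar(X) ≤ 1/2 }`. -/
noncomputable def conductance (P : S → S → ℝ) (pbar : S → ℝ) : ℝ :=
  sInf {r | ∃ X : Set S, 0 < mass pbar X ∧ mass pbar X ≤ 1/2 ∧ r = bottleneck P pbar X}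

end Defs

section Graph

variable {V : Type*} [Fintype V]

/-- Neighborhood `B(X) = {v ∉ X : (v,v') ∈ E for some v' ∈ X}`. -/
def nbhd (E : V → V → Prop) (X : Set V) : Set V :=
  {v | v ∉ X ∧ ∃ v' ∈ X, E v v'}

/-- A matrix on `V` is local w.r.t. the graph: `P v' v = 0` whenever `(v,v') ∉ E`. -/
def IsLocalMatrix (E : V → V → Prop) (P : V → V → ℝ) : Prop :=
  ∀ v' v, ¬ E v v' → P v' v = 0

/-- Graph conductance `Φ_pbar`: supremum of `Φ(P)` over local stochastic `P` fixing `pbar`. -/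
noncomputable def graphConductance (E : V → V → Prop) (pbar : V → ℝ) : ℝ :=
  sSup {r | ∃ P : V → V → ℝ, IsStochastic P ∧ IsLocalMatrix E P ∧
    matVec P pbar = pbar ∧ r = conductance P pbar}

/-- A family of stochastic linear maps is local w.r.t. the graph. -/
def IsLocalFamily (E : V → V → Prop) (Ψ : ℕ → (V → ℝ) →ₗ[ℝ] (V → ℝ)) : Prop :=
  ∀ (X : Set V) (p₀ : V → ℝ), IsProbDist p₀ → ∀ t : ℕ,
    mass (Ψ (t+1) p₀) X ≤ mass (Ψ t p₀) X + mass (Ψ t p₀) (nbhd E X)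

end Graph

section Lift

variable {C V : Type*} [Fintype C] [Fintype V]

/-- A stochastic matrix on the lifted space `C × V` is local in the lifted sense. -/
def IsLocalLift (E : V → V → Prop) (P : C × V → C × V → ℝ) : Prop :=
  ∀ c' v' c v, ¬ E v v' → P (c', v') (c, v) = 0

open scoped Classical in
/-- Initialization `F[p](c,v) = p v` if `c = ca v`, else `0`. -/
noncomputable def liftInit (ca : V → C) (p : V → ℝ) : C × V → ℝ :=
  fun x => if x.1 = ca x.2 then p x.2 else 0

/-- Marginal map `f(p̂)(v) = ∑_c p̂(c,v)`. -/
def margDist (phat : C × V → ℝ) : V → ℝ := fun v => ∑ c, phat (c, v)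

/-- Induced chain on `V` of a lifted chain `P` with stationary distribution `phat`. -/
noncomputable def inducedChain (P : C × V → C × V → ℝ) (phat : C × V → ℝ) : V → V → ℝ :=
  fun v' v => ∑ c, ∑ c', (phat (c, v) / margDist phat v) * P (c', v') (c, v)

end Lift

section MyAux

open scoped Classical

variable {S : Type*} [Fintype S]

private lemma my_ite_sum {α : Type*} [Fintype α] (c : Prop) [Decidable c] (f : α → ℝ) :
    (if c then ∑ x, f x else 0) = ∑ x, if c then f x else 0 := by
  split <;> simp

private lemma my_sum_prod {A B : Type*} [Fintype A] [Fintype B] (f : A × B → ℝ) :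
    ∑ x, f x = ∑ b, ∑ a, f (a, b) := by
  rw [Fintype.sum_prod_type, Finset.sum_comm]

private lemma my_mass_eq (p : S → ℝ) (X : Set S) :
    mass p X = ∑ s, if s ∈ X then p s else 0 := by
  simp [mass, Set.indicator_apply]

private lemma my_tv_lower (p q : S → ℝ) (h : ∑ s, p s = ∑ s, q s) (X : Set S) :
    mass p X - mass q X ≤ tvDist p q := by
  have hsum : ∑ s, (p s - q s) = 0 := by
    rw [Finset.sum_sub_distrib, h, sub_self]
  have hM : mass p X - mass q X = ∑ s, if s ∈ X then p s - q s else 0 := by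
    rw [my_mass_eq, my_mass_eq, ← Finset.sum_sub_distrib]
    exact Finset.sum_congr rfl fun s _ => by split <;> simp
  have key : ∑ s, (if s ∈ X then p s - q s else -(p s - q s)) ≤ ∑ s, |p s - q s| := by
    refine Finset.sum_le_sum fun s _ => ?_
    split
    · exact le_abs_self _
    · exact neg_le_abs _
  have key2 : ∑ s, (if s ∈ X then p s - q s else -(p s - q s))
      = 2 * (∑ s, (if s ∈ X then p s - q s else 0)) - ∑ s, (p s - q s) := by
    rw [Finset.mul_sum, ← Finset.sum_sub_distrib]
    exact Finset.sum_congr rfl fun s _ => by split <;> ring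
  rw [hsum, sub_zero] at key2
  rw [hM, tvDist]
  linarith

private lemma my_matVec_sum (P : S → S → ℝ) (hP : IsStochastic P) (r : S → ℝ) :
    ∑ s, matVec P r s = ∑ s, r s := by
  simp only [matVec]
  rw [Finset.sum_comm]
  simp [← Finset.sum_mul, hP.2]

private lemma my_mass_step (P : S → S → ℝ) (hP : IsStochastic P) (r : S → ℝ)
    (hr : ∀ s, 0 ≤ r s) (A : Set S) :
    mass r A - (∑ s, ∑ s', if s ∈ A ∧ s' ∉ A then P s' s * r s else 0)
      ≤ mass (matVec P r) A := by
  have hleak : (∑ s, ∑ s', if s ∈ A ∧ s' ∉ A then P s' s * r s else 0)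
      = ∑ s ∈ Finset.univ.filter (fun s => s ∈ A),
          r s * ∑ s' ∈ Finset.univ.filter (fun s' => s' ∉ A), P s' s := by
    rw [Finset.sum_filter]
    refine Finset.sum_congr rfl fun s _ => ?_
    by_cases hs : s ∈ A
    · simp only [hs, if_true, true_and, Finset.mul_sum, Finset.sum_filter]
      exact Finset.sum_congr rfl fun s' _ => by split <;> ring
    · simp [hs]
  have hsplit : ∀ s, (∑ s' ∈ Finset.univ.filter (fun s' => s' ∈ A), P s' s)
      = 1 - ∑ s' ∈ Finset.univ.filter (fun s' => s' ∉ A), P s' s := by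
    intro s
    have h2 := Finset.sum_filter_add_sum_filter_not Finset.univ (fun s' => s' ∈ A)
      (fun s' => P s' s)
    rw [hP.2 s] at h2
    linarith
  have h1 : mass (matVec P r) A
      = ∑ s, (∑ s' ∈ Finset.univ.filter (fun s' => s' ∈ A), P s' s) * r s := by
    rw [my_mass_eq, ← Finset.sum_filter]
    simp only [matVec]
    rw [Finset.sum_comm]
    simp [Finset.sum_mul]
  have h2 : ∑ s ∈ Finset.univ.filter (fun s => s ∈ A),
        (∑ s' ∈ Finset.univ.filter (fun s' => s' ∈ A), P s' s) * r s
      ≤ ∑ s, (∑ s' ∈ Finset.univ.filter (fun s' => s' ∈ A), P s' s) * r s :=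
    Finset.sum_le_sum_of_subset_of_nonneg (Finset.filter_subset _ _)
      (fun s _ _ => mul_nonneg (Finset.sum_nonneg fun s' _ => hP.1 s' s) (hr s))
  have h3 : ∑ s ∈ Finset.univ.filter (fun s => s ∈ A),
        (∑ s' ∈ Finset.univ.filter (fun s' => s' ∈ A), P s' s) * r s
      = (∑ s ∈ Finset.univ.filter (fun s => s ∈ A), r s)
        - ∑ s ∈ Finset.univ.filter (fun s => s ∈ A),
            r s * ∑ s' ∈ Finset.univ.filter (fun s' => s' ∉ A), P s' s := by
    rw [← Finset.sum_sub_distrib]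
    exact Finset.sum_congr rfl fun s _ => by rw [hsplit s]; ring
  rw [h1, hleak, my_mass_eq, ← Finset.sum_filter, ← h3]
  exact h2

end MyAux

/-- starting from `p̂` conditioned on `C × X` (with `0 < p̂(C×X) ≤ 1/2`),
the marginal of `P^t p̂_{C×X}` stays at total variation distance at least
`1/2 − t·Φ_X(P_V)` from the stationary marginal `p̄`. -/
theorem marginal_tvDist_lower_bound
    {C V : Type} [Fintype C] [Fintype V]
    (P : C × V → C × V → ℝ) (hP : IsStochastic P)
    (phat : C × V → ℝ) (hphat : IsProbDist phat) (hinv : matVec P phat = phat)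
    (hpos : ∀ v : V, 0 < margDist phat v)
    (X : Set V)
    (hX1 : 0 < mass phat {x : C × V | x.2 ∈ X})
    (hX2 : mass phat {x : C × V | x.2 ∈ X} ≤ 1/2)
    (t : ℕ) :
    1/2 - (t : ℝ) * bottleneck (inducedChain P phat) (margDist phat) X
      ≤ tvDist (margDist ((matVec P)^[t] (condDist phat {x : C × V | x.2 ∈ X})))
          (margDist phat) := by
  classical
  set A : Set (C × V) := {x : C × V | x.2 ∈ X} with hA
  have hα0 : 0 < mass phat A := hX1
  set Q : C × V → ℝ := condDist phat A with hQ
  set Φ : ℝ := bottleneck (inducedChain P phat) (margDist phat) X with hΦ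
  have hqs : ∀ n, (matVec P)^[n+1] Q = matVec P ((matVec P)^[n] Q) :=
    fun n => Function.iterate_succ_apply' _ _ _
  -- pointwise domination by phat / mass phat A, and nonnegativity
  have hdom : ∀ n, (∀ x, 0 ≤ (matVec P)^[n] Q x)
      ∧ (∀ x, (matVec P)^[n] Q x ≤ phat x / mass phat A) := by
    intro n
    induction n with
    | zero =>
      refine ⟨fun x => ?_, fun x => ?_⟩
      · exact Set.indicator_nonneg (fun s _ => div_nonneg (hphat.1 s) hα0.le) x
      · by_cases hx : x ∈ A
        · simp [hQ, condDist, Set.indicator_of_mem hx]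
        · simp only [Function.iterate_zero, id_eq, hQ, condDist,
            Set.indicator_of_notMem hx]
          exact div_nonneg (hphat.1 x) hα0.le
    | succ n ih =>
      rw [hqs n]
      refine ⟨fun x => ?_, fun x => ?_⟩
      · exact Finset.sum_nonneg fun y _ => mul_nonneg (hP.1 x y) (ih.1 y)
      · have h1 : matVec P ((matVec P)^[n] Q) x
            ≤ matVec P (fun y => phat y / mass phat A) x :=
          Finset.sum_le_sum fun y _ => mul_le_mul_of_nonneg_left (ih.2 y) (hP.1 x y)
        have h2 : matVec P (fun y => phat y / mass phat A) x = phat x / mass phat A := by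
          have hx := congrFun hinv x
          simp only [matVec] at hx
          simp only [matVec, ← mul_div_assoc]
          rw [← Finset.sum_div, hx]
        linarith
  -- masses of marginals
  have hmassX : ∀ r : C × V → ℝ, mass (margDist r) X = mass r A := by
    intro r
    rw [my_mass_eq, my_mass_eq, my_sum_prod (fun x => if x ∈ A then r x else 0)]
    refine Finset.sum_congr rfl fun v _ => ?_
    simp only [margDist, my_ite_sum]
    refine Finset.sum_congr rfl fun c _ => ?_
    simp [hA]
  -- total masses
  have htot : ∀ n, ∑ x, (matVec P)^[n] Q x = 1 := by
    intro n
    induction n with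
    | zero =>
      simp only [Function.iterate_zero, id_eq]
      have h1 : ∑ x, Q x = (∑ x, if x ∈ A then phat x else 0) / mass phat A := by
        rw [Finset.sum_div]
        refine Finset.sum_congr rfl fun x _ => ?_
        rw [hQ]
        simp only [condDist, Set.indicator_apply]
        split <;> simp
      rw [h1, ← my_mass_eq, div_self hα0.ne']
    | succ n ih => rw [hqs, my_matVec_sum P hP, ih]
  have hmarg_tot : ∀ r : C × V → ℝ, ∑ x, r x = 1 → ∑ v, margDist r v = 1 := by
    intro r hr
    rw [my_sum_prod r] at hr
    simpa [margDist] using hr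
  -- the bottleneck equals the lifted flow over mass phat A
  have hRHSflow : ergFlow P phat A
      = ∑ v, ∑ v', ∑ c, ∑ c',
          if v ∈ X ∧ v' ∉ X then P (c', v') (c, v) * phat (c, v) else 0 := by
    rw [ergFlow]
    simp only [my_sum_prod]
    refine Finset.sum_congr rfl fun v _ => ?_
    rw [Finset.sum_comm]
    refine Finset.sum_congr rfl fun v' _ => Finset.sum_congr rfl fun c _ =>
      Finset.sum_congr rfl fun c' _ => ?_
    simp [hA]
  have hLHSflow : ergFlow (inducedChain P phat) (margDist phat) X
      = ∑ v, ∑ v', ∑ c, ∑ c',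
          if v ∈ X ∧ v' ∉ X then P (c', v') (c, v) * phat (c, v) else 0 := by
    rw [ergFlow]
    refine Finset.sum_congr rfl fun v _ => Finset.sum_congr rfl fun v' _ => ?_
    simp only [← my_ite_sum]
    split
    · simp only [inducedChain, Finset.sum_mul]
      refine Finset.sum_congr rfl fun c _ => ?_
      refine Finset.sum_congr rfl fun c' _ => ?_
      have h := (hpos v).ne'
      field_simp
    · rfl
  have hΦval : Φ = ergFlow P phat A / mass phat A := by
    rw [hΦ, bottleneck, hLHSflow, ← hRHSflow, hmassX phat]
  -- per-step leakage bound
  have hleak_le : ∀ n,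
      (∑ x : C × V, ∑ x', if x ∈ A ∧ x' ∉ A then P x' x * (matVec P)^[n] Q x else 0) ≤ Φ := by
    intro n
    have hle : (∑ x : C × V, ∑ x', if x ∈ A ∧ x' ∉ A then P x' x * (matVec P)^[n] Q x else 0)
        ≤ ∑ x : C × V, ∑ x',
            (if x ∈ A ∧ x' ∉ A then P x' x * phat x else 0) / mass phat A := by
      refine Finset.sum_le_sum fun x _ => Finset.sum_le_sum fun x' _ => ?_
      by_cases h : x ∈ A ∧ x' ∉ A
      · simp only [h, if_true]
        calc P x' x * (matVec P)^[n] Q x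
            ≤ P x' x * (phat x / mass phat A) :=
              mul_le_mul_of_nonneg_left ((hdom n).2 x) (hP.1 x' x)
          _ = P x' x * phat x / mass phat A := (mul_div_assoc _ _ _).symm
      · simp [h]
    refine hle.trans (le_of_eq ?_)
    rw [hΦval, ergFlow]
    simp only [← Finset.sum_div]
  -- induction on mass in A
  have hind : ∀ n : ℕ, 1 - (n : ℝ) * Φ ≤ mass ((matVec P)^[n] Q) A := by
    intro n
    induction n with
    | zero =>
      simp only [Nat.cast_zero, zero_mul, sub_zero, Function.iterate_zero, id_eq]
      have h1 : mass Q A = ∑ x, Q x := by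
        rw [my_mass_eq]
        refine Finset.sum_congr rfl fun x _ => ?_
        by_cases hx : x ∈ A
        · simp [hx]
        · simp [hx, hQ, condDist, Set.indicator_of_notMem hx]
      have h2 := htot 0
      simp only [Function.iterate_zero, id_eq] at h2
      rw [h1, h2]
    | succ n ih =>
      have h1 := my_mass_step P hP ((matVec P)^[n] Q) (hdom n).1 A
      have h2 := hleak_le n
      rw [hqs]
      push_cast
      linarith
  -- conclusion
  have hfin := my_tv_lower (margDist ((matVec P)^[t] Q)) (margDist phat)
    (by rw [hmarg_tot _ (htot t), hmarg_tot phat hphat.2]) X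
  rw [hmassX, hmassX] at hfin
  have := hind t
  linarith
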